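/- Let k be a positive integer and let W_1, …, W_{2k} be the dipole words defined by W_{2a−1} = ⋄^{2k+5} 1 1 (⋄1)^{a−1} (1⋄) (⋄1)^{k−a} 1 ⋄^{2k+6} and W_{2a} = 1^{2k+6} 0 (⋄⋄)^{k−a} (1⋄) (⋄⋄)^{a−1} ⋄ ⋄ 1^{2k+5} for a ∈ {1,…,k}. Define V_a = W_{2a−1} ⋄^{6k+14} W_{2a} for a ∈ {1,…,k}, each of length 18k+42. Then for all a, b ∈ {1,…,k}, f(V_a, Rev(V_b)) > 0 if and only if a = b. -/
import Mathlib


/-- The alphabet Σ = {0, 1, ⋄} of dipole letters. -/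
inductive Dip : Type
  | zero : Dip
  | one : Dip
  | blank : Dip
  deriving DecidableEq

open Dip

/-- The force between a pair of letters: 1 if {x,y} = {0,1}, -1 if x = y ∈ {0,1}, 0 otherwise. -/
def lf : Dip → Dip → ℤ
  | zero, one => 1
  | one, zero => 1
  | zero, zero => -1
  | one, one => -1
  | _, _ => 0

/-- The force between a pair of equal-length words: the sum of letterwise forces. -/
def force (X Y : List Dip) : ℤ := (List.zipWith lf X Y).sum

/-- `n` repetitions of a letter. -/
def rep (n : ℕ) (x : Dip) : List Dip := List.replicate n x

/-- `n` repetitions of a word. -/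
def rep2 (n : ℕ) (p : List Dip) : List Dip := (List.replicate n p).flatten

/-- `W_{2a-1} = ⋄^{2k+5} 1 1 (⋄1)^{a-1} (1⋄) (⋄1)^{k-a} 1 ⋄^{2k+6}`. -/
def Wodd (k a : ℕ) : List Dip :=
  rep (2 * k + 5) blank ++ [one, one] ++ rep2 (a - 1) [blank, one] ++ [one, blank] ++
    rep2 (k - a) [blank, one] ++ [one] ++ rep (2 * k + 6) blank

/-- `W_{2a} = 1^{2k+6} 0 (⋄⋄)^{k-a} (1⋄) (⋄⋄)^{a-1} ⋄ ⋄ 1^{2k+5}`. -/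
def Weven (k a : ℕ) : List Dip :=
  rep (2 * k + 6) one ++ [zero] ++ rep2 (k - a) [blank, blank] ++ [one, blank] ++
    rep2 (a - 1) [blank, blank] ++ [blank, blank] ++ rep (2 * k + 5) one

/-- The concatenated word `V_a = W_{2a-1} ⋄^{6k+14} W_{2a}`. -/
def Vword (k a : ℕ) : List Dip := Wodd k a ++ rep (6 * k + 14) blank ++ Weven k a

lemma lf_blank_left (y : Dip) : lf blank y = 0 := by cases y <;> rfl
lemma lf_blank_right (x : Dip) : lf x blank = 0 := by cases x <;> rfl
lemma lf_comm (x y : Dip) : lf x y = lf y x := by cases x <;> cases y <;> rfl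

lemma force_cons (x y : Dip) (X Y : List Dip) :
    force (x :: X) (y :: Y) = lf x y + force X Y := by
  simp [force]

lemma force_append {X Y : List Dip} (h : X.length = Y.length) (X' Y' : List Dip) :
    force (X ++ X') (Y ++ Y') = force X Y + force X' Y' := by
  unfold force
  rw [List.zipWith_append (h := h), List.sum_append]

lemma rep_succ (n : ℕ) (x : Dip) : rep (n + 1) x = x :: rep n x := by
  simp [rep, List.replicate_succ]

lemma force_blank_left (n : ℕ) : ∀ Y, force (rep n blank) Y = 0 := by
  induction n with
  | zero => intro Y; rfl
  | succ n ih =>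
    intro Y
    cases Y with
    | nil => simp [force]
    | cons y Y => rw [rep_succ, force_cons, lf_blank_left, ih Y]; ring

lemma force_comm (X : List Dip) : ∀ Y, force X Y = force Y X := by
  induction X with
  | nil => intro Y; cases Y <;> rfl
  | cons x X ih =>
    intro Y
    cases Y with
    | nil => rfl
    | cons y Y => rw [force_cons, force_cons, lf_comm, ih Y]

lemma force_blank_right (n : ℕ) (X : List Dip) : force X (rep n blank) = 0 := by
  rw [force_comm]; exact force_blank_left n X

lemma force_reverse (X : List Dip) : ∀ Y, X.length = Y.length →
    force X.reverse Y.reverse = force X Y := by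
  induction X with
  | nil => intro Y h; cases Y <;> simp_all
  | cons x X ih =>
    intro Y h
    cases Y with
    | nil => simp at h
    | cons y Y =>
      simp only [List.length_cons, Nat.add_right_cancel_iff] at h
      simp only [List.reverse_cons]
      rw [force_append (by simp [h]), force_cons, force_cons, ih Y h]
      simp [force]
      ring

lemma len_rep (n : ℕ) (x : Dip) : (rep n x).length = n := by simp [rep]

lemma rep2_succ (n : ℕ) (p : List Dip) : rep2 (n + 1) p = p ++ rep2 n p := by
  simp [rep2, List.replicate_succ]

lemma len_rep2 (n : ℕ) (p : List Dip) : (rep2 n p).length = n * p.length := by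
  induction n with
  | zero => simp [rep2]
  | succ n ih => rw [rep2_succ, List.length_append, ih]; ring

lemma rep_add (m n : ℕ) (x : Dip) : rep (m + n) x = rep m x ++ rep n x := by
  unfold rep; rw [List.replicate_add]

lemma rep2_add (m n : ℕ) (p : List Dip) : rep2 (m + n) p = rep2 m p ++ rep2 n p := by
  unfold rep2; rw [List.replicate_add, List.flatten_append]

lemma rep2_one (p : List Dip) : rep2 1 p = p := by simp [rep2]

lemma rep2_blank (n : ℕ) : rep2 n [blank, blank] = rep (2 * n) blank := by
  induction n with
  | zero => rfl
  | succ n ih =>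
    rw [rep2_succ, ih, show 2 * (n + 1) = 2 + 2 * n by ring, rep_add]
    rfl

lemma rev_rep (n : ℕ) (x : Dip) : (rep n x).reverse = rep n x := by
  simp [rep]

lemma rev_Weven (k b : ℕ) : (Weven k b).reverse =
    rep (2 * k + 5) one ++ [blank, blank] ++ rep2 (b - 1) [blank, blank] ++ [blank, one] ++
      rep2 (k - b) [blank, blank] ++ [zero] ++ rep (2 * k + 6) one := by
  unfold Weven
  simp only [List.reverse_append, rev_rep, rep2_blank, List.append_assoc]
  rfl

lemma force_pair (x1 x2 y1 y2 : Dip) :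
    force [x1, x2] [y1, y2] = lf x1 y1 + lf x2 y2 := by simp [force]

/-- The key half computation. -/
lemma g_eq (k a b : ℕ) (ha1 : 1 ≤ a) (hak : a ≤ k) (hb1 : 1 ≤ b) (hbk : b ≤ k) :
    force (Wodd k a) ((Weven k b).reverse) = if a = b then 1 else 0 := by
  rw [rev_Weven]
  unfold Wodd
  rcases lt_trichotomy a b with hlt | heq | hgt
  · -- a < b
    obtain ⟨i, rfl⟩ : ∃ i, a = i + 1 := ⟨a - 1, by omega⟩
    obtain ⟨c, rfl⟩ : ∃ c, b = (i + 1) + (c + 1) := ⟨b - i - 2, by omega⟩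
    obtain ⟨d, rfl⟩ : ∃ d, k = (i + 1) + (c + 1) + d := ⟨k - i - c - 2, by omega⟩
    have e1 : (i + 1) - 1 = i := by omega
    have e2 : ((i+1)+(c+1)+d) - (i+1) = c + 1 + d := by omega
    have e3 : ((i+1)+(c+1)) - 1 = i + 1 + c := by omega
    have e4 : ((i+1)+(c+1)+d) - ((i+1)+(c+1)) = d := by omega
    rw [e1, e2, e3, e4, if_neg (by omega)]
    rw [Nat.add_assoc c 1 d, rep2_add, rep2_add,
      Nat.add_assoc i 1 c, rep2_add, rep2_add, rep2_one]
    -- now align and compute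
    simp only [List.append_assoc]
    rw [force_append (by simp [len_rep, len_rep2]),
        force_append (by simp [len_rep, len_rep2]),
        force_append (by simp [len_rep, len_rep2]),
        force_append (by simp [len_rep, len_rep2]),
        force_append (by simp [len_rep, len_rep2]),
        force_append (by simp [len_rep, len_rep2]),
        force_append (by simp [len_rep, len_rep2]),
        force_append (by simp [len_rep, len_rep2])]
    simp only [rep2_blank, force_blank_left, force_blank_right]
    simp [force, lf]
  · -- a = b
    subst heq
    obtain ⟨i, rfl⟩ : ∃ i, a = i + 1 := ⟨a - 1, by omega⟩
    obtain ⟨d, rfl⟩ : ∃ d, k = (i + 1) + d := ⟨k - i - 1, by omega⟩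
    have e1 : (i + 1) - 1 = i := by omega
    have e2 : ((i+1)+d) - (i+1) = d := by omega
    rw [e1, e2, if_pos rfl]
    simp only [List.append_assoc]
    rw [force_append (by simp [len_rep, len_rep2]),
        force_append (by simp [len_rep, len_rep2]),
        force_append (by simp [len_rep, len_rep2]),
        force_append (by simp [len_rep, len_rep2]),
        force_append (by simp [len_rep, len_rep2]),
        force_append (by simp [len_rep, len_rep2])]
    simp only [rep2_blank, force_blank_left, force_blank_right]
    simp [force, lf]
  · -- b < a
    obtain ⟨i, rfl⟩ : ∃ i, b = i + 1 := ⟨b - 1, by omega⟩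
    obtain ⟨c, rfl⟩ : ∃ c, a = (i + 1) + (c + 1) := ⟨a - i - 2, by omega⟩
    obtain ⟨d, rfl⟩ : ∃ d, k = (i + 1) + (c + 1) + d := ⟨k - i - c - 2, by omega⟩
    have e1 : ((i+1)+(c+1)) - 1 = i + 1 + c := by omega
    have e2 : ((i+1)+(c+1)+d) - ((i+1)+(c+1)) = d := by omega
    have e3 : (i + 1) - 1 = i := by omega
    have e4 : ((i+1)+(c+1)+d) - (i+1) = c + 1 + d := by omega
    rw [e1, e2, e3, e4, if_neg (by omega)]
    rw [Nat.add_assoc i 1 c, rep2_add, rep2_add, rep2_one,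
      Nat.add_assoc c 1 d, rep2_add, rep2_add]
    simp only [List.append_assoc]
    rw [force_append (by simp [len_rep, len_rep2]),
        force_append (by simp [len_rep, len_rep2]),
        force_append (by simp [len_rep, len_rep2]),
        force_append (by simp [len_rep, len_rep2]),
        force_append (by simp [len_rep, len_rep2]),
        force_append (by simp [len_rep, len_rep2]),
        force_append (by simp [len_rep, len_rep2]),
        force_append (by simp [len_rep, len_rep2])]
    simp only [rep2_blank, force_blank_left, force_blank_right]
    simp [force, lf]

lemma len_Wodd (k a : ℕ) (ha1 : 1 ≤ a) (hak : a ≤ k) :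
    (Wodd k a).length = 6 * k + 14 := by
  unfold Wodd
  simp [len_rep, len_rep2]
  omega

lemma len_Weven (k a : ℕ) (ha1 : 1 ≤ a) (hak : a ≤ k) :
    (Weven k a).length = 6 * k + 14 := by
  unfold Weven
  simp [len_rep, len_rep2]
  omega

/-- The concatenated words are attracted exactly when their indices agree. -/
theorem stmt11 (k : ℕ) (hk : 0 < k) :
    ∀ a ∈ Finset.Icc 1 k, ∀ b ∈ Finset.Icc 1 k,
      (0 < force (Vword k a) ((Vword k b).reverse) ↔ a = b) := by
  intro a ha b hb
  simp only [Finset.mem_Icc] at ha hb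
  have key : force (Vword k a) ((Vword k b).reverse) =
      (if a = b then 1 else 0) + (if b = a then 1 else 0) := by
    have hrev : (Vword k b).reverse =
        (Weven k b).reverse ++ rep (6 * k + 14) blank ++ (Wodd k b).reverse := by
      unfold Vword
      simp [List.reverse_append, rev_rep, List.append_assoc]
    rw [hrev]
    unfold Vword
    simp only [List.append_assoc]
    rw [force_append (by rw [len_Wodd k a ha.1 ha.2, List.length_reverse,
          len_Weven k b hb.1 hb.2]),
        force_append (by simp [len_rep, len_rep2])]
    rw [force_blank_left]
    have h2 : force (Weven k a) ((Wodd k b).reverse) = if b = a then 1 else 0 := by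
      rw [force_comm, ← force_reverse _ _ (by
        rw [List.length_reverse, len_Wodd k b hb.1 hb.2, len_Weven k a ha.1 ha.2]),
        List.reverse_reverse]
      exact g_eq k b a hb.1 hb.2 ha.1 ha.2
    rw [g_eq k a b ha.1 ha.2 hb.1 hb.2, h2]
    ring
  rw [key]
  constructor
  · intro h
    by_contra hne
    rw [if_neg hne, if_neg (fun h' => hne h'.symm)] at h
    omega
  · intro h; subst h; simp
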